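/- Let f ∈ ℤ_p{x}, α a simple zero of f (f(α)=0, f'(α)≠0), e = v_p(f'(α)), m > e. If D is such that v_p(a_i) > e + m for all coefficients a_i of f with i > D, then the truncation f_D has a zero ξ_D ∈ ℤ_p with ξ_D ≡ α mod p^m and v_p(f_D'(ξ_D)) = e; consequently ∫_{α+p^mℤ_p} |f_D|_p^s dx = ∫_{α+p^mℤ_p} |f|_p^s dx for all s > 0. -/

import Mathlib

open MeasureTheory Filter

section S14Aux

variable {p : ℕ} [Fact p.Prime]

lemma s14_summable {f b : ℕ → ℤ_[p]} (hb : Tendsto b atTop (nhds 0))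
    (h : ∀ i, ‖f i‖ ≤ ‖b i‖) : Summable f := by
  apply NonarchimedeanAddGroup.summable_of_tendsto_cofinite_zero
  rw [Nat.cofinite_eq_atTop, tendsto_zero_iff_norm_tendsto_zero]
  exact squeeze_zero (fun i => norm_nonneg _) h
    (tendsto_zero_iff_norm_tendsto_zero.mp hb)

lemma s14_mul_le {c : ℤ_[p]} (b : ℤ_[p]) (hc : ‖c‖ ≤ 1) : ‖b * c‖ ≤ ‖b‖ := by
  rw [norm_mul]; exact mul_le_of_le_one_right (norm_nonneg _) hc

lemma s14_shift {b : ℕ → ℤ_[p]} (hb : Tendsto b atTop (nhds 0)) :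
    Tendsto (fun i => b (i + 1)) atTop (nhds 0) := hb.comp (tendsto_add_atTop_nat 1)

lemma s14_summable_pow {b : ℕ → ℤ_[p]} (hb : Tendsto b atTop (nhds 0)) (x : ℤ_[p]) :
    Summable fun i => b i * x ^ i :=
  s14_summable hb fun i => s14_mul_le _ (PadicInt.norm_le_one _)

lemma s14_cast_pow_le_one (i j : ℕ) (x : ℤ_[p]) : ‖((j : ℕ) : ℤ_[p]) * x ^ i‖ ≤ 1 := by
  rw [norm_mul]
  exact mul_le_one₀ (PadicInt.norm_le_one _) (norm_nonneg _) (PadicInt.norm_le_one _)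

lemma s14_summable_deriv {b : ℕ → ℤ_[p]} (hb : Tendsto b atTop (nhds 0)) (x : ℤ_[p]) :
    Summable fun i => ((i + 1 : ℕ) : ℤ_[p]) * b (i + 1) * x ^ i := by
  refine s14_summable (b := fun i => b (i + 1)) (s14_shift hb) fun i => ?_
  calc ‖((i + 1 : ℕ) : ℤ_[p]) * b (i + 1) * x ^ i‖
      = ‖b (i + 1) * (((i + 1 : ℕ) : ℤ_[p]) * x ^ i)‖ := by ring_nf
    _ ≤ ‖b (i + 1)‖ := s14_mul_le _ (s14_cast_pow_le_one _ _ _)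

lemma s14_norm_eq_of_sub_lt {x y : ℤ_[p]} (h : ‖x - y‖ < ‖y‖) : ‖x‖ = ‖y‖ := by
  have h1 : x = (x - y) + y := by ring
  rw [h1, IsUltrametricDist.norm_add_eq_max_of_norm_ne_norm (ne_of_lt h), max_eq_right h.le]

lemma s14_factor {b : ℕ → ℤ_[p]} (hb : Tendsto b atTop (nhds 0)) (x y : ℤ_[p]) :
    ∃ T U : ℤ_[p],
      (∑' i : ℕ, b i * x ^ i) - (∑' i : ℕ, b i * y ^ i) = (x - y) * T ∧
      T - (∑' i : ℕ, ((i + 1 : ℕ) : ℤ_[p]) * b (i + 1) * y ^ i) = (x - y) * U := by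
  set G : ℕ → ℤ_[p] := fun n => ∑ j ∈ Finset.range n, x ^ j * y ^ (n - 1 - j) with hGdef
  have hG : ∀ n : ℕ, x ^ n - y ^ n = (x - y) * G n := fun n => by
    rw [mul_comm]; exact (geom_sum₂_mul x y n).symm
  set V : ℕ → ℤ_[p] := fun i => ∑ j ∈ Finset.range (i + 1), y ^ (i - j) * G j with hVdef
  have hGV : ∀ i : ℕ, G (i + 1) - ((i + 1 : ℕ) : ℤ_[p]) * y ^ i = (x - y) * V i := by
    intro i
    have h1 : ((i + 1 : ℕ) : ℤ_[p]) * y ^ i = ∑ _j ∈ Finset.range (i + 1), y ^ i := by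
      rw [Finset.sum_const, Finset.card_range, nsmul_eq_mul]
    rw [hGdef, hVdef, h1]
    simp only [Nat.add_sub_cancel]
    rw [← Finset.sum_sub_distrib, Finset.mul_sum]
    refine Finset.sum_congr rfl fun j hj => ?_
    have hji : j ≤ i := by
      have := Finset.mem_range.mp hj; omega
    have h2 : (y : ℤ_[p]) ^ i = y ^ j * y ^ (i - j) := by
      rw [← pow_add]; congr 1; omega
    rw [h2]
    calc x ^ j * y ^ (i - j) - y ^ j * y ^ (i - j)
        = (x ^ j - y ^ j) * y ^ (i - j) := by ring
      _ = ((x - y) * G j) * y ^ (i - j) := by rw [hG j]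
      _ = (x - y) * (y ^ (i - j) * G j) := by ring
  have hGle : ∀ n, ‖b n * G n‖ ≤ ‖b n‖ := fun n => s14_mul_le _ (PadicInt.norm_le_one _)
  have hsumT : Summable fun i => b i * G i := s14_summable hb hGle
  refine ⟨∑' i, b i * G i, ∑' i, b (i + 1) * V i, ?_, ?_⟩
  · have h1 : Summable fun i => b i * x ^ i := s14_summable_pow hb x
    have h2 : Summable fun i => b i * y ^ i := s14_summable_pow hb y
    rw [← Summable.tsum_sub h1 h2]
    rw [← Summable.tsum_mul_left (x - y) hsumT]
    exact tsum_congr fun i => by rw [← mul_sub, hG i]; ring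
  · have hT0 : (∑' i, b i * G i) = ∑' i, b (i + 1) * G (i + 1) := by
      rw [Summable.tsum_eq_zero_add hsumT]
      simp [hGdef]
    have h3 : Summable fun i => b (i + 1) * G (i + 1) := by
      refine s14_summable (s14_shift hb) fun i => s14_mul_le _ (PadicInt.norm_le_one _)
    have h4 : Summable fun i => ((i + 1 : ℕ) : ℤ_[p]) * b (i + 1) * y ^ i :=
      s14_summable_deriv hb y
    have h5 : Summable fun i => b (i + 1) * V i :=
      s14_summable (s14_shift hb) fun i => s14_mul_le _ (PadicInt.norm_le_one _)
    rw [hT0, ← Summable.tsum_sub h3 h4, ← Summable.tsum_mul_left (x - y) h5]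
    refine tsum_congr fun i => ?_
    calc b (i + 1) * G (i + 1) - ((i + 1 : ℕ) : ℤ_[p]) * b (i + 1) * y ^ i
        = b (i + 1) * (G (i + 1) - ((i + 1 : ℕ) : ℤ_[p]) * y ^ i) := by ring
      _ = b (i + 1) * ((x - y) * V i) := by rw [hGV i]
      _ = (x - y) * (b (i + 1) * V i) := by ring

/-- Near a simple zero, the norm of the series is `‖F'(β)‖ * ‖x - β‖`. -/
lemma s14_norm_formula {b : ℕ → ℤ_[p]} (hb : Tendsto b atTop (nhds 0)) {β x : ℤ_[p]} {r : ℝ}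
    (h0 : (∑' i : ℕ, b i * β ^ i) = 0)
    (hd : ‖∑' i : ℕ, ((i + 1 : ℕ) : ℤ_[p]) * b (i + 1) * β ^ i‖ = r)
    (hx : ‖x - β‖ < r) :
    ‖∑' i : ℕ, b i * x ^ i‖ = r * ‖x - β‖ := by
  obtain ⟨T, U, h1, h2⟩ := s14_factor hb x β
  rw [h0, sub_zero] at h1
  have hU : ‖(x - β) * U‖ ≤ ‖x - β‖ := s14_mul_le _ (PadicInt.norm_le_one _)
  have hT : ‖T‖ = r := by
    rw [← hd]
    exact s14_norm_eq_of_sub_lt ((h2 ▸ hU).trans_lt (hx.trans_eq hd.symm))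
  rw [h1, norm_mul, hT, mul_comm]

end S14Aux

/-- Near a simple zero `α` of a restricted power series `f` (coefficients `a i → 0`,
`f x = ∑' i, a i * x ^ i`, `f' x = ∑' i, (i+1) * a (i+1) * x ^ i`, `e = v_p(f'(α))`,
`m > e`), if all coefficients of index `> D` have valuation `> e + m`, then the
truncation `f_D = ∑_{i ≤ D} a i x^i` has a zero `ξ_D ≡ α mod p^m` with
`v_p(f_D'(ξ_D)) = e`, and its integral over the ball `α + p^m ℤ_p` agrees with that
of `f`. -/
theorem stmt_14 (p : ℕ) [Fact p.Prime]
    [MeasurableSpace ℤ_[p]] [BorelSpace ℤ_[p]]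
    (μ : Measure ℤ_[p]) [μ.IsAddHaarMeasure] (hμ : μ Set.univ = 1)
    (a : ℕ → ℤ_[p]) (ha : Tendsto a atTop (nhds 0)) (α : ℤ_[p]) (e m D : ℕ)
    (hzero : (∑' i : ℕ, a i * α ^ i) = 0)
    (hne : (∑' i : ℕ, ((i + 1 : ℕ) : ℤ_[p]) * a (i + 1) * α ^ i) ≠ 0)
    (hval : ‖∑' i : ℕ, ((i + 1 : ℕ) : ℤ_[p]) * a (i + 1) * α ^ i‖ = (p : ℝ) ^ (-(e : ℤ)))
    (hm : e < m)
    (hD : ∀ i : ℕ, D < i → ‖a i‖ < (p : ℝ) ^ (-((e : ℤ) + m))) :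
    (∃ ξ : ℤ_[p],
      (∑ i ∈ Finset.range (D + 1), a i * ξ ^ i) = 0 ∧
      (p : ℤ_[p]) ^ m ∣ (ξ - α) ∧
      ‖∑ i ∈ Finset.range D, ((i + 1 : ℕ) : ℤ_[p]) * a (i + 1) * ξ ^ i‖ = (p : ℝ) ^ (-(e : ℤ))) ∧
    (∀ s : ℝ, 0 < s →
      (∫ x in {x : ℤ_[p] | ‖x - α‖ ≤ (p : ℝ) ^ (-(m : ℤ))},
          ‖∑ i ∈ Finset.range (D + 1), a i * x ^ i‖ ^ s ∂μ)
        = ∫ x in {x : ℤ_[p] | ‖x - α‖ ≤ (p : ℝ) ^ (-(m : ℤ))},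
            ‖∑' i : ℕ, a i * x ^ i‖ ^ s ∂μ) := by
  classical
  have hp1 : (1 : ℝ) < p := by exact_mod_cast (Fact.out : p.Prime).one_lt
  have hp0 : (0 : ℝ) < p := lt_trans one_pos hp1
  -- truncated coefficients
  set b : ℕ → ℤ_[p] := fun i => if i ≤ D then a i else 0 with hbdef
  have hb : Tendsto b atTop (nhds 0) := by
    refine tendsto_const_nhds.congr' ?_
    filter_upwards [eventually_ge_atTop (D + 1)] with i hi
    simp only [hbdef, if_neg (by omega : ¬ i ≤ D)]
  have htrunc : ∀ y : ℤ_[p],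
      (∑' i : ℕ, b i * y ^ i) = ∑ i ∈ Finset.range (D + 1), a i * y ^ i := by
    intro y
    rw [tsum_eq_sum (s := Finset.range (D + 1))
      (fun i hi => by
        rw [hbdef]; simp only
        rw [if_neg (by simpa [Nat.lt_succ_iff] using hi), zero_mul])]
    refine Finset.sum_congr rfl fun i hi => ?_
    rw [hbdef]; simp only
    rw [if_pos (by simpa [Nat.lt_succ_iff] using Finset.mem_range.mp hi)]
  have hderiv : ∀ y : ℤ_[p],
      (∑' i : ℕ, ((i + 1 : ℕ) : ℤ_[p]) * b (i + 1) * y ^ i)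
        = ∑ i ∈ Finset.range D, ((i + 1 : ℕ) : ℤ_[p]) * a (i + 1) * y ^ i := by
    intro y
    rw [tsum_eq_sum (s := Finset.range D)
      (fun i hi => by
        rw [hbdef]; simp only
        rw [if_neg (by simp only [Finset.mem_range, not_lt] at hi; omega), mul_zero, zero_mul])]
    refine Finset.sum_congr rfl fun i hi => ?_
    rw [hbdef]; simp only
    rw [if_pos (by have := Finset.mem_range.mp hi; omega)]
  -- tail bounds
  set K : ℝ := (p : ℝ) ^ (-((e : ℤ) + m + 1)) with hKdef
  have hK0 : 0 ≤ K := zpow_nonneg hp0.le _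
  have htail_coeff : ∀ i, ‖a i - b i‖ ≤ K := by
    intro i
    by_cases hi : i ≤ D
    · rw [hbdef]; simp only
      rw [if_pos hi, sub_self, norm_zero]; exact hK0
    · rw [hbdef]; simp only
      rw [if_neg hi, sub_zero]
      have h1 := (PadicInt.norm_lt_pow_iff_norm_le_pow_sub_one _ _).mp (hD i (by omega))
      have h2 : (-((e : ℤ) + m) - 1) = (-((e : ℤ) + m + 1)) := by ring
      rwa [h2] at h1
  have h_tail : ∀ y : ℤ_[p],
      ‖(∑' i : ℕ, a i * y ^ i) - (∑' i : ℕ, b i * y ^ i)‖ ≤ K := by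
    intro y
    rw [← Summable.tsum_sub (s14_summable_pow ha y) (s14_summable_pow hb y)]
    refine IsUltrametricDist.norm_tsum_le_of_forall_le_of_nonneg hK0 fun i => ?_
    rw [← sub_mul]
    exact (s14_mul_le _ (PadicInt.norm_le_one _)).trans (htail_coeff i)
  have h_tail_deriv :
      ‖(∑' i : ℕ, ((i + 1 : ℕ) : ℤ_[p]) * a (i + 1) * α ^ i)
        - (∑' i : ℕ, ((i + 1 : ℕ) : ℤ_[p]) * b (i + 1) * α ^ i)‖ ≤ K := by
    rw [← Summable.tsum_sub (s14_summable_deriv ha α) (s14_summable_deriv hb α)]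
    refine IsUltrametricDist.norm_tsum_le_of_forall_le_of_nonneg hK0 fun i => ?_
    have h1 : ((i + 1 : ℕ) : ℤ_[p]) * a (i + 1) * α ^ i
        - ((i + 1 : ℕ) : ℤ_[p]) * b (i + 1) * α ^ i
        = (a (i + 1) - b (i + 1)) * (((i + 1 : ℕ) : ℤ_[p]) * α ^ i) := by ring
    rw [h1]
    exact (s14_mul_le _ (s14_cast_pow_le_one _ _ _)).trans (htail_coeff (i + 1))
  have hKe : K < (p : ℝ) ^ (-(e : ℤ)) :=
    zpow_lt_zpow_right₀ hp1 (by omega)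
  -- the truncated series at α
  have hgd : ‖∑' i : ℕ, ((i + 1 : ℕ) : ℤ_[p]) * b (i + 1) * α ^ i‖ = (p : ℝ) ^ (-(e : ℤ)) := by
    rw [← hval]
    refine s14_norm_eq_of_sub_lt ?_
    rw [norm_sub_rev]
    exact h_tail_deriv.trans_lt (hKe.trans_eq hval.symm)
  have hgα : ‖∑' i : ℕ, b i * α ^ i‖ ≤ K := by
    have h1 := h_tail α
    rwa [hzero, zero_sub, norm_neg] at h1
  -- the truncation as a polynomial, and Hensel's lemma
  set F : Polynomial ℤ_[p] :=
    ∑ i ∈ Finset.range (D + 1), Polynomial.C (a i) * Polynomial.X ^ i with hFdef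
  have hFeval : ∀ y : ℤ_[p], F.eval y = ∑ i ∈ Finset.range (D + 1), a i * y ^ i := by
    intro y
    rw [hFdef, Polynomial.eval_finset_sum]
    simp
  have hFderiv : ∀ y : ℤ_[p],
      F.derivative.eval y = ∑ i ∈ Finset.range D, ((i + 1 : ℕ) : ℤ_[p]) * a (i + 1) * y ^ i := by
    intro y
    rw [hFdef, Polynomial.derivative_sum]
    simp only [Polynomial.derivative_C_mul, Polynomial.derivative_X_pow]
    rw [Polynomial.eval_finset_sum]
    simp only [Polynomial.eval_mul, Polynomial.eval_C, Polynomial.eval_pow, Polynomial.eval_X]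
    rw [Finset.sum_range_succ']
    simp only [Nat.cast_zero, zero_mul, mul_zero, add_zero, Nat.add_sub_cancel]
    refine Finset.sum_congr rfl fun i hi => by ring
  have hFα : ‖F.eval α‖ < ‖F.derivative.eval α‖ ^ 2 := by
    rw [hFeval, hFderiv, ← htrunc α, ← hderiv α, hgd]
    refine lt_of_le_of_lt hgα ?_
    rw [sq, ← zpow_add₀ (ne_of_gt hp0)]
    exact zpow_lt_zpow_right₀ hp1 (by omega)
  obtain ⟨z, hz0, hz1, hz2, _⟩ := hensels_lemma hFα
  have hgz : (∑' i : ℕ, b i * z ^ i) = 0 := by rw [htrunc, ← hFeval]; exact hz0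
  have hdz_norm : ‖∑' i : ℕ, ((i + 1 : ℕ) : ℤ_[p]) * b (i + 1) * z ^ i‖
      = (p : ℝ) ^ (-(e : ℤ)) := by
    rw [Polynomial.coe_aeval_eq_eval, Polynomial.coe_aeval_eq_eval] at hz2
    rw [hderiv, ← hFderiv, hz2, hFderiv α, ← hderiv α, hgd]
  have hz1' : ‖z - α‖ < (p : ℝ) ^ (-(e : ℤ)) := by
    rw [Polynomial.coe_aeval_eq_eval, hFderiv α, ← hderiv α, hgd] at hz1
    exact hz1
  -- sharpen the distance bound
  have h_formula : ‖∑' i : ℕ, b i * α ^ i‖ = (p : ℝ) ^ (-(e : ℤ)) * ‖α - z‖ :=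
    s14_norm_formula hb hgz hdz_norm (by rw [norm_sub_rev]; exact hz1')
  have hαz : ‖α - z‖ ≤ (p : ℝ) ^ (-((m : ℤ) + 1)) := by
    have h1 : (p : ℝ) ^ (-(e : ℤ)) * ‖α - z‖
        ≤ (p : ℝ) ^ (-(e : ℤ)) * (p : ℝ) ^ (-((m : ℤ) + 1)) := by
      rw [← zpow_add₀ (ne_of_gt hp0)]
      have h2 : (-(e : ℤ)) + (-((m : ℤ) + 1)) = (-((e : ℤ) + m + 1)) := by ring
      rw [h2, ← hKdef, ← h_formula]
      exact hgα
    exact le_of_mul_le_mul_left h1 (zpow_pos hp0 _)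
  have hzm : ‖z - α‖ ≤ (p : ℝ) ^ (-(m : ℤ)) := by
    rw [norm_sub_rev]
    exact hαz.trans (zpow_le_zpow_right₀ hp1.le (by omega))
  have hme : (p : ℝ) ^ (-(m : ℤ)) < (p : ℝ) ^ (-(e : ℤ)) :=
    zpow_lt_zpow_right₀ hp1 (by omega)
  constructor
  · refine ⟨z, ?_, ?_, ?_⟩
    · rw [← htrunc]; exact hgz
    · exact Ideal.mem_span_singleton.mp
        ((PadicInt.norm_le_pow_iff_mem_span_pow _ m).mp hzm)
    · rw [← hderiv z]; exact hdz_norm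
  · intro s hs
    set S : Set ℤ_[p] := {x : ℤ_[p] | ‖x - α‖ ≤ (p : ℝ) ^ (-(m : ℤ))} with hSdef
    have hSmeas : MeasurableSet S := by
      have h1 : S = Metric.closedBall α ((p : ℝ) ^ (-(m : ℤ))) := by
        ext x
        simp [hSdef, Metric.mem_closedBall, dist_eq_norm]
      rw [h1]
      exact measurableSet_closedBall
    set c : ℤ_[p] := z - α with hcdef
    have hshiftS : ∀ x : ℤ_[p], x + c ∈ S ↔ x ∈ S := by
      intro x
      simp only [hSdef, Set.mem_setOf_eq]
      constructor
      · intro h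
        have h1 : x - α = (x + c - α) + (-c) := by ring
        rw [h1]
        exact (IsUltrametricDist.norm_add_le_max _ _).trans
          (max_le h (by rwa [norm_neg, hcdef]))
      · intro h
        have h1 : x + c - α = (x - α) + c := by ring
        rw [h1]
        exact (IsUltrametricDist.norm_add_le_max _ _).trans (max_le h (hcdef ▸ hzm))
    have hf_norm : ∀ x ∈ S, ‖∑' i : ℕ, a i * x ^ i‖ = (p : ℝ) ^ (-(e : ℤ)) * ‖x - α‖ :=
      fun x hx => s14_norm_formula ha hzero hval (lt_of_le_of_lt hx hme)
    have hg_norm : ∀ x ∈ S,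
        ‖∑ i ∈ Finset.range (D + 1), a i * (x + c) ^ i‖
          = (p : ℝ) ^ (-(e : ℤ)) * ‖x - α‖ := by
      intro x hx
      have hxz : x + c - z = x - α := by rw [hcdef]; ring
      rw [← htrunc]
      have h1 := s14_norm_formula hb hgz hdz_norm (x := x + c)
        (by rw [hxz]; exact lt_of_le_of_lt hx hme)
      rw [h1, hxz]
    calc (∫ x in S, ‖∑ i ∈ Finset.range (D + 1), a i * x ^ i‖ ^ s ∂μ)
        = ∫ x, S.indicator
            (fun y => ‖∑ i ∈ Finset.range (D + 1), a i * y ^ i‖ ^ s) x ∂μ :=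
          (integral_indicator hSmeas).symm
      _ = ∫ x, S.indicator
            (fun y => ‖∑ i ∈ Finset.range (D + 1), a i * y ^ i‖ ^ s) (x + c) ∂μ :=
          (integral_add_right_eq_self _ c).symm
      _ = ∫ x, S.indicator (fun y => ‖∑' i : ℕ, a i * y ^ i‖ ^ s) x ∂μ := by
          congr 1
          funext x
          by_cases hx : x ∈ S
          · rw [Set.indicator_of_mem ((hshiftS x).mpr hx), Set.indicator_of_mem hx]
            rw [hg_norm x hx, hf_norm x hx]
          · rw [Set.indicator_of_notMem (fun h => hx ((hshiftS x).mp h)),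
              Set.indicator_of_notMem hx]
      _ = ∫ x in S, ‖∑' i : ℕ, a i * x ^ i‖ ^ s ∂μ := integral_indicator hSmeas
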